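/- Let c > 0 and let g : [0,1] → ℝ be continuous with g(0) = 0 and g(t) > 0 for t ∈ (0,1], absolutely continuous with g(t) = ∫₀ᵗ g'(s) ds for an integrable g'. If ∫₀¹ (g'(s) − c)²/g(s) ds < ∞, then g(t)/t → c as t → 0⁺. -/

import Mathlib

open MeasureTheory Filter

set_option maxHeartbeats 1000000 in
theorem stmt_18 (c : ℝ) (hc : 0 < c)
    (g g' : ℝ → ℝ)
    (hgcont : ContinuousOn g (Set.Icc 0 1))
    (hg0 : g 0 = 0)
    (hgpos : ∀ t ∈ Set.Ioc (0:ℝ) 1, 0 < g t)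
    (hg'int : IntegrableOn g' (Set.Icc 0 1))
    (hAC : ∀ t ∈ Set.Icc (0:ℝ) 1, g t = ∫ s in (0:ℝ)..t, g' s)
    (hfin : IntegrableOn (fun s => (g' s - c) ^ 2 / g s) (Set.Icc 0 1)) :
    Tendsto (fun t => g t / t) (nhdsWithin 0 (Set.Ioi 0)) (nhds c) := by
  -- notation
  set F : ℝ → ℝ := fun t => ∫ s in Set.Ioc 0 t, (g' s - c) ^ 2 / g s with hF
  have hgint : IntegrableOn g (Set.Icc 0 1) := hgcont.integrableOn_Icc
  -- basic facts about F
  have hFnonneg : ∀ t ∈ Set.Icc (0:ℝ) 1, 0 ≤ F t := by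
    intro t ht
    apply setIntegral_nonneg measurableSet_Ioc
    intro s hs
    have hgs : 0 < g s := hgpos s ⟨hs.1, hs.2.trans ht.2⟩
    positivity
  have hFmono : ∀ t ∈ Set.Icc (0:ℝ) 1, F t ≤ F 1 := by
    intro t ht
    apply setIntegral_mono_set (hfin.mono_set Set.Ioc_subset_Icc_self)
    · filter_upwards [ae_restrict_mem measurableSet_Ioc] with s hs
      have hgs : 0 < g s := hgpos s hs
      positivity
    · exact HasSubset.Subset.eventuallyLE (Set.Ioc_subset_Ioc_right ht.2)
  -- the representation of g t - c t
  have hrep : ∀ t ∈ Set.Icc (0:ℝ) 1, g t - c * t = ∫ s in Set.Ioc 0 t, (g' s - c) := by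
    intro t ht
    have h1 : g t = ∫ s in Set.Ioc 0 t, g' s := by
      rw [hAC t ht, intervalIntegral.integral_of_le ht.1]
    have hint : IntegrableOn g' (Set.Ioc 0 t) :=
      hg'int.mono_set ((Set.Ioc_subset_Icc_self).trans (Set.Icc_subset_Icc_right ht.2))
    rw [integral_sub hint (integrableOn_const measure_Ioc_lt_top.ne), ← h1,
      setIntegral_const]
    simp [Real.volume_Ioc, ENNReal.toReal_ofReal ht.1, mul_comm, ht.1]
  -- Cauchy-Schwarz bound
  have hCS : ∀ t ∈ Set.Icc (0:ℝ) 1,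
      |g t - c * t| ≤ Real.sqrt (F t) * Real.sqrt (∫ s in Set.Ioc 0 t, g s) := by
    intro t ht
    set μ := volume.restrict (Set.Ioc (0:ℝ) t) with hμ
    have hsub : Set.Ioc (0:ℝ) t ⊆ Set.Icc 0 1 :=
      (Set.Ioc_subset_Icc_self).trans (Set.Icc_subset_Icc_right ht.2)
    have hsub1 : Set.Ioc (0:ℝ) t ⊆ Set.Ioc 0 1 := Set.Ioc_subset_Ioc_right ht.2
    have hmem : ∀ᵐ s ∂μ, s ∈ Set.Ioc (0:ℝ) t := ae_restrict_mem measurableSet_Ioc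
    set u : ℝ → ℝ := fun s => |g' s - c| / Real.sqrt (g s) with hu
    set v : ℝ → ℝ := fun s => Real.sqrt (g s) with hv
    have hg'm : AEStronglyMeasurable g' μ := (hg'int.mono_set hsub).aestronglyMeasurable
    have hgm : AEStronglyMeasurable g μ :=
      (hgcont.mono hsub).aestronglyMeasurable measurableSet_Ioc
    have hvm : AEStronglyMeasurable v μ :=
      Real.continuous_sqrt.comp_aestronglyMeasurable hgm
    have hsubm : AEStronglyMeasurable (fun s => g' s - c) μ :=
      hg'm.sub aestronglyMeasurable_const
    have habsm : AEStronglyMeasurable (fun s => |g' s - c|) μ :=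
      continuous_abs.comp_aestronglyMeasurable hsubm
    have hum : AEStronglyMeasurable u μ := by
      rw [hu]
      exact (habsm.aemeasurable.div hvm.aemeasurable).aestronglyMeasurable
    have hu2 : Integrable (fun s => u s ^ 2) μ := by
      apply (hfin.mono_set hsub).congr
      filter_upwards [hmem] with s hs
      have hgs : 0 < g s := hgpos s (hsub1 hs)
      rw [hu]
      simp only [div_pow, sq_abs, Real.sq_sqrt hgs.le]
    have hv2 : Integrable (fun s => v s ^ 2) μ := by
      apply (hgint.mono_set hsub).congr
      filter_upwards [hmem] with s hs
      have hgs : 0 < g s := hgpos s (hsub1 hs)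
      rw [hv]
      simp [Real.sq_sqrt hgs.le]
    have huL : MemLp u (ENNReal.ofReal 2) μ := by
      rw [show ENNReal.ofReal 2 = 2 by norm_num]
      exact (memLp_two_iff_integrable_sq hum).2 hu2
    have hvL : MemLp v (ENNReal.ofReal 2) μ := by
      rw [show ENNReal.ofReal 2 = 2 by norm_num]
      exact (memLp_two_iff_integrable_sq hvm).2 hv2
    have hpq : Real.HolderConjugate 2 2 := Real.HolderConjugate.two_two
    have hunn : 0 ≤ᵐ[μ] u :=
      Filter.Eventually.of_forall fun s => div_nonneg (abs_nonneg _) (Real.sqrt_nonneg _)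
    have hvnn : 0 ≤ᵐ[μ] v := Filter.Eventually.of_forall fun s => Real.sqrt_nonneg _
    have holder := integral_mul_le_Lp_mul_Lq_of_nonneg hpq hunn hvnn huL hvL
    -- rewrite the three integrals
    have e1 : ∫ s, u s * v s ∂μ = ∫ s, |g' s - c| ∂μ := by
      apply integral_congr_ae
      filter_upwards [hmem] with s hs
      have hgs : 0 < g s := hgpos s (hsub1 hs)
      rw [hu, hv]
      exact div_mul_cancel₀ _ (ne_of_gt (Real.sqrt_pos.2 hgs))
    have e2 : ∫ s, u s ^ (2:ℝ) ∂μ = F t := by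
      apply integral_congr_ae
      filter_upwards [hmem] with s hs
      have hgs : 0 < g s := hgpos s (hsub1 hs)
      rw [Real.rpow_two, hu]
      simp only [div_pow, sq_abs, Real.sq_sqrt hgs.le]
    have e3 : ∫ s, v s ^ (2:ℝ) ∂μ = ∫ s in Set.Ioc 0 t, g s := by
      apply integral_congr_ae
      filter_upwards [hmem] with s hs
      have hgs : 0 < g s := hgpos s (hsub1 hs)
      rw [Real.rpow_two, hv]
      simp [Real.sq_sqrt hgs.le]
    rw [e1, e2, e3] at holder
    have habs : |g t - c * t| ≤ ∫ s, |g' s - c| ∂μ := by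
      rw [hrep t ht]
      simpa [Real.norm_eq_abs] using
        norm_integral_le_integral_norm (μ := μ) (f := fun s => g' s - c)
    refine habs.trans (holder.trans ?_)
    have hFt : 0 ≤ F t := hFnonneg t ht
    have hIt : 0 ≤ ∫ s in Set.Ioc 0 t, g s := by
      apply setIntegral_nonneg measurableSet_Ioc
      exact fun s hs => (hgpos s (hsub1 hs)).le
    rw [Real.sqrt_eq_rpow, Real.sqrt_eq_rpow]
  -- bound on the max of g
  set K : ℝ := (Real.sqrt (F 1) + Real.sqrt c) ^ 2 with hK
  have hGK : ∀ t ∈ Set.Ioc (0:ℝ) 1, ∀ s ∈ Set.Icc 0 t, g s ≤ K * t := by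
    intro t ht
    have hsub : Set.Icc (0:ℝ) t ⊆ Set.Icc 0 1 := Set.Icc_subset_Icc_right ht.2
    obtain ⟨x, hx, hmax⟩ := isCompact_Icc.exists_isMaxOn ⟨0, Set.left_mem_Icc.2 ht.1.le⟩
      (hgcont.mono hsub)
    rw [isMaxOn_iff] at hmax
    have hKnn : (0:ℝ) ≤ K := by positivity
    suffices hgx : g x ≤ K * t by intro s hs; exact (hmax s hs).trans hgx
    rcases eq_or_lt_of_le hx.1 with h0 | h0
    · rw [← h0, hg0]; exact mul_nonneg hKnn ht.1.le
    · -- x ∈ Ioc 0 t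
      have hx1 : x ∈ Set.Icc (0:ℝ) 1 := hsub hx
      have hgxpos : 0 < g x := hgpos x ⟨h0, hx1.2⟩
      -- integral bound
      have hIb : (∫ s in Set.Ioc 0 x, g s) ≤ g x * x := by
        calc (∫ s in Set.Ioc 0 x, g s) ≤ ∫ _ in Set.Ioc 0 x, g x := by
              apply setIntegral_mono_on
              · exact hgint.mono_set ((Set.Ioc_subset_Icc_self).trans (Set.Icc_subset_Icc_right hx1.2))
              · exact integrableOn_const measure_Ioc_lt_top.ne
              · exact measurableSet_Ioc
              · exact fun s hs => hmax s ⟨hs.1.le, hs.2.trans hx.2⟩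
          _ = g x * x := by
              rw [setIntegral_const]
              simp [Real.volume_Ioc, ENNReal.toReal_ofReal h0.le, mul_comm, max_eq_left h0.le]
      have h1 : g x - c * x ≤ Real.sqrt (F 1) * Real.sqrt (g x * x) := by
        refine (le_abs_self _).trans ((hCS x hx1).trans ?_)
        exact mul_le_mul (Real.sqrt_le_sqrt (hFmono x hx1)) (Real.sqrt_le_sqrt hIb)
          (Real.sqrt_nonneg _) (Real.sqrt_nonneg _)
      -- quadratic bootstrap
      set a := Real.sqrt (F 1) with ha
      set b := Real.sqrt c with hb
      set m := Real.sqrt (g x) with hm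
      set r := Real.sqrt x with hr
      have hanng : 0 ≤ a := Real.sqrt_nonneg _
      have hbnn : 0 ≤ b := Real.sqrt_nonneg _
      have hmnn : 0 ≤ m := Real.sqrt_nonneg _
      have hrnn : 0 ≤ r := Real.sqrt_nonneg _
      have hb2 : b ^ 2 = c := Real.sq_sqrt hc.le
      have hm2 : m ^ 2 = g x := Real.sq_sqrt hgxpos.le
      have hr2 : r ^ 2 = x := Real.sq_sqrt h0.le
      have hmul : Real.sqrt (g x * x) = m * r := Real.sqrt_mul hgxpos.le x
      have hE : m ^ 2 ≤ b ^ 2 * r ^ 2 + a * r * m := by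
        rw [hm2, hb2, hr2]
        nlinarith [h1, hmul]
      have hmr : m ≤ (a + b) * r := by
        have hmbr : 0 < m + b * r := by positivity
        nlinarith [mul_nonneg (mul_nonneg hanng hbnn) (mul_nonneg hrnn hrnn), hE, hmbr]
      have hKx : g x ≤ K * x :=
        calc g x = m ^ 2 := hm2.symm
          _ ≤ ((a + b) * r) ^ 2 := pow_le_pow_left₀ hmnn hmr 2
          _ = K * x := by rw [hK, mul_pow, hr2]
      exact hKx.trans (by nlinarith [hx.2, hKnn])
  -- integral of g bound
  have hIg : ∀ t ∈ Set.Ioc (0:ℝ) 1, (∫ s in Set.Ioc 0 t, g s) ≤ K * t * t := by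
    intro t ht
    calc (∫ s in Set.Ioc 0 t, g s) ≤ ∫ _ in Set.Ioc 0 t, K * t := by
          apply setIntegral_mono_on
          · exact hgint.mono_set ((Set.Ioc_subset_Icc_self).trans (Set.Icc_subset_Icc_right ht.2))
          · exact integrableOn_const measure_Ioc_lt_top.ne
          · exact measurableSet_Ioc
          · exact fun s hs => hGK t ht s (Set.Ioc_subset_Icc_self hs)
      _ = K * t * t := by
          rw [setIntegral_const]
          simp [Real.volume_Ioc, ENNReal.toReal_ofReal ht.1.le, mul_comm, ht.1.le]
  -- final bound
  have hfinal : ∀ t ∈ Set.Ioc (0:ℝ) 1, |g t / t - c| ≤ Real.sqrt K * Real.sqrt (F t) := by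
    intro t ht
    have ht0 : 0 < t := ht.1
    have hKnn : (0:ℝ) ≤ K := by positivity
    have hsqK : Real.sqrt (K * t * t) = Real.sqrt K * t := by
      rw [mul_assoc, Real.sqrt_mul hKnn, Real.sqrt_mul_self ht0.le]
    have h1 : |g t - c * t| ≤ Real.sqrt (F t) * (Real.sqrt K * t) := by
      refine (hCS t ⟨ht0.le, ht.2⟩).trans ?_
      rw [← hsqK]
      gcongr
      exact hIg t ht
    have h2 : g t / t - c = (g t - c * t) / t := by field_simp
    rw [h2, abs_div, abs_of_pos ht0, div_le_iff₀ ht0]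
    nlinarith [h1]
  -- F tends to 0
  have hF0 : Tendsto F (nhdsWithin 0 (Set.Ioi 0)) (nhds 0) := by
    have hcont : ContinuousOn F (Set.Icc 0 1) :=
      intervalIntegral.continuousOn_primitive hfin
    have h0 : F 0 = 0 := by simp [hF]
    have := (hcont 0 (by norm_num)).tendsto
    rw [h0] at this
    rw [← nhdsWithin_Ioc_eq_nhdsGT (zero_lt_one' ℝ)]
    exact this.mono_left (nhdsWithin_mono 0 Set.Ioc_subset_Icc_self)
  -- conclude
  have hsq : Tendsto (fun t => Real.sqrt K * Real.sqrt (F t)) (nhdsWithin 0 (Set.Ioi 0)) (nhds 0) := by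
    have := (Real.continuous_sqrt.tendsto' 0 0 Real.sqrt_zero).comp hF0
    simpa using this.const_mul (Real.sqrt K)
  rw [← tendsto_sub_nhds_zero_iff]
  apply squeeze_zero_norm' _ hsq
  filter_upwards [Ioc_mem_nhdsGT one_pos] with t ht
  simpa [Real.norm_eq_abs] using hfinal t ht
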